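/- arXiv:2102.04941 — 2 statements merged into one kernel-verified Lean document; each statement's English description precedes it below -/
import Mathlib

section
/- For every Q : S × S → ℝ with Q_{ij} ≥ 0 for all (i,j) ∈ B and Q_{ij} = 0 off B, it holds that ψ̄_{Q̃}(Q) ≥ 0; moreover ψ̄_{Q̃}(Q̃) = 0. Consequently, for every c : S × S → ℝ the surrogate function ψ_{Q̃}(Q) = Σ_{(i,j)∈B} Q_{ij}·c_{ij} − ψ̄_{Q̃}(Q) satisfies ψ_{Q̃}(Q) ≤ Σ_{(i,j)∈B} Q_{ij}·c_{ij} for all such Q, with equality at Q = Q̃, i.e., ψ_{Q̃}(Q̃) = Σ_{(i,j)∈B} Q̃_{ij}·c_{ij}. -/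
open Finset

/-- Row sum `μ_i(Q) = Σ_{j : (i,j) ∈ B} Q_{ij}` of an edge measure `Q` supported on `B`. -/
noncomputable def rowSum {S : Type} [Fintype S] [DecidableEq S]
    (B : Finset (S × S)) (Q : S × S → ℝ) (i : S) : ℝ :=
  ∑ j ∈ Finset.univ.filter (fun j => (i, j) ∈ B), Q (i, j)

/-- The shifted edge measure `Q̂_{ij} = (1-κ)·Q̃_{ij} + κ·Q_{ij}`. -/
noncomputable def hatQ {α : Type} (Qt : α → ℝ) (κ : ℝ) (Q : α → ℝ) : α → ℝ :=
  fun e => (1 - κ) * Qt e + κ * Q e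

/-- The surrogate penalty function
`ψ̄_{Q̃}(Q) = κ'·( Σ_{(i,j)∈B} Q̂_{ij}·log(Q̂_{ij}/Q̃_{ij}) − Σ_{i∈S} μ̂_i·log(μ̂_i/μ̃_i) )`,
with the convention `0·log(0/b) = 0` (automatic, since `Real.log 0 = 0`). -/
noncomputable def psibar {S : Type} [Fintype S] [DecidableEq S]
    (B : Finset (S × S)) (Qt : S × S → ℝ) (κ κ' : ℝ) (Q : S × S → ℝ) : ℝ :=
  κ' * ((∑ e ∈ B, hatQ Qt κ Q e * Real.log (hatQ Qt κ Q e / Qt e)) -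
        ∑ i : S, rowSum B (hatQ Qt κ Q) i *
          Real.log (rowSum B (hatQ Qt κ Q) i / rowSum B Qt i))

/-- Log-sum inequality: `(∑ a) * log((∑ a)/(∑ b)) ≤ ∑ a_j log(a_j/b_j)`. -/
lemma log_sum_inequality {J : Type*} (s : Finset J) (a b : J → ℝ)
    (ha : ∀ j ∈ s, 0 ≤ a j) (hb : ∀ j ∈ s, 0 < b j) :
    (∑ j ∈ s, a j) * Real.log ((∑ j ∈ s, a j) / (∑ j ∈ s, b j)) ≤
      ∑ j ∈ s, a j * Real.log (a j / b j) := by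
  rcases s.eq_empty_or_nonempty with rfl | hs
  · simp
  set A := ∑ j ∈ s, a j with hA
  set Bs := ∑ j ∈ s, b j with hBs
  have hBs0 : 0 < Bs := Finset.sum_pos hb hs
  rcases eq_or_lt_of_le (Finset.sum_nonneg ha) with h0 | hA0
  · have : ∀ j ∈ s, a j = 0 := by
      intro j hj
      exact (Finset.sum_eq_zero_iff_of_nonneg ha).1 h0.symm j hj
    have hA0 : A = 0 := h0.symm
    rw [hA0]
    simp only [zero_mul]
    apply Finset.sum_nonneg
    intro j hj; rw [this j hj]; simp
  · -- termwise: a j - b j * (A/Bs) ≤ a j * log(a j/b j) - a j * log(A/Bs)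
    have key : ∀ j ∈ s, a j - b j * (A / Bs) ≤
        a j * Real.log (a j / b j) - a j * Real.log (A / Bs) := by
      intro j hj
      rcases eq_or_lt_of_le (ha j hj) with h0 | hpos
      · rw [← h0]
        simp only [zero_mul, zero_sub, sub_zero, Real.log_zero]
        have : 0 ≤ b j * (A / Bs) :=
          mul_nonneg (hb j hj).le (div_nonneg hA0.le hBs0.le)
        simp [Real.log_zero]
        positivity
      · have hx : 0 < (a j / b j) / (A / Bs) :=
          div_pos (div_pos hpos (hb j hj)) (div_pos hA0 hBs0)
        have hlog := Real.one_sub_inv_le_log_of_pos hx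
        have hmul := mul_le_mul_of_nonneg_left hlog hpos.le
        have hinv : ((a j / b j) / (A / Bs))⁻¹ = (b j * A) / (a j * Bs) := by
          field_simp
        rw [Real.log_div (ne_of_gt (div_pos hpos (hb j hj))) (ne_of_gt (div_pos hA0 hBs0)), hinv] at hmul
        have : a j * (1 - b j * A / (a j * Bs)) = a j - b j * (A / Bs) := by
          field_simp
        rw [mul_sub, mul_sub] at hmul
        linarith [hmul, this]
    have hsum := Finset.sum_le_sum key
    rw [Finset.sum_sub_distrib, Finset.sum_sub_distrib, ← Finset.sum_mul,
      ← Finset.sum_mul] at hsum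
    have : A - Bs * (A / Bs) = 0 := by field_simp; ring
    rw [← hA, ← hBs] at hsum
    linarith [hsum]

lemma sum_over_B {S : Type} [Fintype S] [DecidableEq S] (B : Finset (S × S)) (f : S × S → ℝ) :
    ∑ e ∈ B, f e = ∑ i : S, ∑ j ∈ Finset.univ.filter (fun j => (i, j) ∈ B), f (i, j) := by
  have hB : B = (Finset.univ ×ˢ Finset.univ).filter (· ∈ B) := by
    ext e; simp
  rw [hB, Finset.sum_filter, Finset.sum_product]
  simp [Finset.sum_filter]

/-- The surrogate penalty `ψ̄_{Q̃}` is nonnegative on the set of edge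
measures that are nonnegative on `B` and vanish off `B`, and it vanishes at `Q = Q̃`.
Consequently, for every `c : S × S → ℝ`, the surrogate function
`ψ_{Q̃}(Q) = Σ_{(i,j)∈B} Q_{ij}·c_{ij} − ψ̄_{Q̃}(Q)` lies below the linear functional
`Σ_{(i,j)∈B} Q_{ij}·c_{ij}`, with equality at `Q = Q̃`. -/
theorem psibar_nonneg_and_value_match {S : Type} [Fintype S] [DecidableEq S]
    (B : Finset (S × S)) (hB : ∀ i : S, ∃ j : S, (i, j) ∈ B)
    (Qt : S × S → ℝ) (hQtoff : ∀ e ∉ B, Qt e = 0) (hQtpos : ∀ e ∈ B, 0 < Qt e)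
    (κ κ' : ℝ) (hκ0 : 0 < κ) (hκ1 : κ ≤ 1) (hκ' : 0 < κ') :
    (∀ Q : S × S → ℝ, (∀ e ∈ B, 0 ≤ Q e) → (∀ e ∉ B, Q e = 0) →
        0 ≤ psibar B Qt κ κ' Q) ∧
    psibar B Qt κ κ' Qt = 0 ∧
    (∀ c : S × S → ℝ, ∀ Q : S × S → ℝ, (∀ e ∈ B, 0 ≤ Q e) → (∀ e ∉ B, Q e = 0) →
        (∑ e ∈ B, Q e * c e) - psibar B Qt κ κ' Q ≤ ∑ e ∈ B, Q e * c e) ∧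
    (∀ c : S × S → ℝ,
        (∑ e ∈ B, Qt e * c e) - psibar B Qt κ κ' Qt = ∑ e ∈ B, Qt e * c e) := by
  have hnn : ∀ Q : S × S → ℝ, (∀ e ∈ B, 0 ≤ Q e) → (∀ e ∉ B, Q e = 0) →
      0 ≤ psibar B Qt κ κ' Q := by
    intro Q hQnn _
    have hhat : ∀ e ∈ B, 0 ≤ hatQ Qt κ Q e := by
      intro e he
      have := hQtpos e he
      have := hQnn e he
      have h1 : 0 ≤ 1 - κ := by linarith
      unfold hatQ
      positivity
    have key : ∑ i : S, rowSum B (hatQ Qt κ Q) i *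
        Real.log (rowSum B (hatQ Qt κ Q) i / rowSum B Qt i) ≤
        ∑ e ∈ B, hatQ Qt κ Q e * Real.log (hatQ Qt κ Q e / Qt e) := by
      rw [sum_over_B]
      apply Finset.sum_le_sum
      intro i _
      exact log_sum_inequality _ _ _
        (fun j hj => hhat (i, j) (Finset.mem_filter.1 hj).2)
        (fun j hj => hQtpos (i, j) (Finset.mem_filter.1 hj).2)
    unfold psibar
    have : 0 ≤ (∑ e ∈ B, hatQ Qt κ Q e * Real.log (hatQ Qt κ Q e / Qt e)) -
        ∑ i : S, rowSum B (hatQ Qt κ Q) i *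
          Real.log (rowSum B (hatQ Qt κ Q) i / rowSum B Qt i) := by linarith
    positivity
  have hval : psibar B Qt κ κ' Qt = 0 := by
    have hhat : hatQ Qt κ Qt = Qt := by
      funext e; unfold hatQ; ring
    have hterm : ∀ x : ℝ, x * Real.log (x / x) = 0 := by
      intro x
      rcases eq_or_ne x 0 with rfl | hx
      · simp
      · rw [div_self hx, Real.log_one, mul_zero]
    unfold psibar
    rw [hhat]
    simp only [hterm, Finset.sum_const_zero]
    simp
  refine ⟨hnn, hval, fun c Q h1 h2 => by linarith [hnn Q h1 h2], fun c => by rw [hval]; ring⟩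
end

section
/- Let Q₀, V : S × S → ℝ vanish off B and consider the affine path Q(θ) = Q₀ + θ·V. Let θ₀ ∈ ℝ be such that Q̂_{ij}(θ₀) = (1−κ)·Q̃_{ij} + κ·(Q₀ + θ₀ V)_{ij} > 0 for all (i,j) ∈ B. Then the function f(θ) = ψ̄_{Q̃}(Q₀ + θ·V) is twice differentiable at θ₀ and its second derivative equals f''(θ₀) = κ²·κ'·( Σ_{(i,j)∈B} V_{ij}² / Q̂_{ij}(θ₀) − Σ_{i∈S} (Σ_{j:(i,j)∈B} V_{ij})² / μ̂_i(θ₀) ), where μ̂_i(θ₀) = Σ_{j:(i,j)∈B} Q̂_{ij}(θ₀); moreover this second derivative is nonnegative. -/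
open Finset

lemma term_hasDerivAt (a b c θ : ℝ) (hx : 0 < a + θ * b) (hc : 0 < c) :
    HasDerivAt (fun t => (a + t * b) * Real.log ((a + t * b) / c))
      (b * (Real.log ((a + θ * b) / c) + 1)) θ := by
  have h1 : HasDerivAt (fun t : ℝ => a + t * b) b θ := by
    simpa using ((hasDerivAt_id θ).mul_const b).const_add a
  have h3 : HasDerivAt (fun t : ℝ => Real.log ((a + t * b) / c))
      (((a + θ * b) / c)⁻¹ * (b / c)) θ :=
    (Real.hasDerivAt_log (by positivity)).comp θ (h1.div_const c)
  have := h1.mul h3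
  convert this using 1
  · rfl
  · rfl
  · rfl
  have hx' := hx.ne'
  have hc' := hc.ne'
  rw [show (a + θ * b) * (((a + θ * b) / c)⁻¹ * (b / c)) = b by field_simp]
  ring

lemma term2_hasDerivAt (a b c θ : ℝ) (hx : 0 < a + θ * b) (hc : 0 < c) :
    HasDerivAt (fun t => b * (Real.log ((a + t * b) / c) + 1))
      (b ^ 2 / (a + θ * b)) θ := by
  have h1 : HasDerivAt (fun t : ℝ => a + t * b) b θ := by
    simpa using ((hasDerivAt_id θ).mul_const b).const_add a
  have h3 : HasDerivAt (fun t : ℝ => Real.log ((a + t * b) / c))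
      (((a + θ * b) / c)⁻¹ * (b / c)) θ :=
    (Real.hasDerivAt_log (by positivity)).comp θ (h1.div_const c)
  have := (h3.add_const 1).const_mul b
  convert this using 1
  · rfl
  · rfl
  have hx' := hx.ne'
  have hc' := hc.ne'
  field_simp

lemma sum_B_fiber {S : Type} [Fintype S] [DecidableEq S] (B : Finset (S × S)) (F : S × S → ℝ) :
    ∑ e ∈ B, F e = ∑ i : S, ∑ j ∈ Finset.univ.filter (fun j => (i, j) ∈ B), F (i, j) := by
  have hB : B = (Finset.univ : Finset (S × S)).filter (· ∈ B) := by
    simp [Finset.filter_mem_eq_inter]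
  rw [hB, Finset.sum_filter, Fintype.sum_prod_type]
  simp [Finset.sum_filter]

/-- Along the affine path `Q(θ) = Q₀ + θ·V` (with `Q₀, V` vanishing off
`B`), if `Q̂_{ij}(θ₀) > 0` for all `(i,j) ∈ B`, then `f(θ) = ψ̄_{Q̃}(Q₀ + θ·V)` is twice
differentiable at `θ₀` with second derivative
`κ²κ'·( Σ_{(i,j)∈B} V_{ij}²/Q̂_{ij}(θ₀) − Σ_{i∈S} (Σ_{j:(i,j)∈B} V_{ij})²/μ̂_i(θ₀) )`,
and this second derivative is nonnegative. -/
theorem psibar_second_deriv_along_affine_path {S : Type} [Fintype S] [DecidableEq S]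
    (B : Finset (S × S)) (hB : ∀ i : S, ∃ j : S, (i, j) ∈ B)
    (Qt : S × S → ℝ) (hQtoff : ∀ e ∉ B, Qt e = 0) (hQtpos : ∀ e ∈ B, 0 < Qt e)
    (κ κ' : ℝ) (hκ0 : 0 < κ) (hκ1 : κ ≤ 1) (hκ' : 0 < κ')
    (Q0 V : S × S → ℝ) (hQ0off : ∀ e ∉ B, Q0 e = 0) (hVoff : ∀ e ∉ B, V e = 0)
    (θ0 : ℝ)
    (hpos : ∀ e ∈ B, 0 < hatQ Qt κ (fun e' => Q0 e' + θ0 * V e') e) :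
    HasDerivAt (deriv (fun θ : ℝ => psibar B Qt κ κ' (fun e => Q0 e + θ * V e)))
      (κ ^ 2 * κ' *
        ((∑ e ∈ B, V e ^ 2 / hatQ Qt κ (fun e' => Q0 e' + θ0 * V e') e) -
         ∑ i : S, (∑ j ∈ Finset.univ.filter (fun j => (i, j) ∈ B), V (i, j)) ^ 2 /
           rowSum B (hatQ Qt κ (fun e' => Q0 e' + θ0 * V e')) i))
      θ0 ∧
    0 ≤ κ ^ 2 * κ' *
        ((∑ e ∈ B, V e ^ 2 / hatQ Qt κ (fun e' => Q0 e' + θ0 * V e') e) -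
         ∑ i : S, (∑ j ∈ Finset.univ.filter (fun j => (i, j) ∈ B), V (i, j)) ^ 2 /
           rowSum B (hatQ Qt κ (fun e' => Q0 e' + θ0 * V e')) i) := by
  classical
  set a : S × S → ℝ := fun e => (1 - κ) * Qt e + κ * Q0 e with ha_def
  set b : S × S → ℝ := fun e => κ * V e with hb_def
  set R : S → Finset S := fun i => Finset.univ.filter (fun j => (i, j) ∈ B) with hR_def
  set A : S → ℝ := fun i => ∑ j ∈ R i, a (i, j) with hA_def
  set Bb : S → ℝ := fun i => ∑ j ∈ R i, b (i, j) with hBb_def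
  -- basic conversions
  have hhat : ∀ (θ : ℝ) (e : S × S),
      hatQ Qt κ (fun e' => Q0 e' + θ * V e') e = a e + θ * b e := by
    intro θ e; simp only [hatQ, ha_def, hb_def]; ring
  have hmemR : ∀ i j, j ∈ R i ↔ (i, j) ∈ B := by
    intro i j; simp [hR_def]
  have hrow : ∀ (θ : ℝ) (i : S),
      rowSum B (hatQ Qt κ (fun e' => Q0 e' + θ * V e')) i = A i + θ * Bb i := by
    intro θ i
    simp only [rowSum, hhat, hA_def, hBb_def, ← hR_def]
    rw [Finset.sum_add_distrib, Finset.mul_sum]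
  have hRne : ∀ i, (R i).Nonempty := by
    intro i; obtain ⟨j, hj⟩ := hB i; exact ⟨j, (hmemR i j).2 hj⟩
  have hxpos : ∀ e ∈ B, 0 < a e + θ0 * b e := by
    intro e he; have := hpos e he; rwa [hhat] at this
  have hCpos : ∀ i, 0 < rowSum B Qt i := by
    intro i
    exact Finset.sum_pos (fun j hj => hQtpos _ ((hmemR i j).1 hj)) (hRne i)
  -- row positivity for any θ with edge positivity
  have hXpos : ∀ θ : ℝ, (∀ e ∈ B, 0 < a e + θ * b e) → ∀ i, 0 < A i + θ * Bb i := by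
    intro θ hθ i
    have : A i + θ * Bb i = ∑ j ∈ R i, (a (i, j) + θ * b (i, j)) := by
      rw [Finset.sum_add_distrib, Finset.mul_sum]
    rw [this]
    exact Finset.sum_pos (fun j hj => hθ _ ((hmemR i j).1 hj)) (hRne i)
  -- the function in closed form
  have hfun : (fun θ : ℝ => psibar B Qt κ κ' (fun e => Q0 e + θ * V e)) =
      (fun θ : ℝ => κ' * ((∑ e ∈ B, (a e + θ * b e) * Real.log ((a e + θ * b e) / Qt e)) -
        ∑ i : S, (A i + θ * Bb i) * Real.log ((A i + θ * Bb i) / rowSum B Qt i))) := by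
    funext θ
    simp only [psibar, hhat, hrow]
  -- eventual positivity near θ0
  have hU : ∀ᶠ θ in nhds θ0, ∀ e ∈ B, 0 < a e + θ * b e := by
    rw [Finset.eventually_all]
    intro e he
    have hcont : Filter.Tendsto (fun θ : ℝ => a e + θ * b e) (nhds θ0)
        (nhds (a e + θ0 * b e)) := by
      exact (continuous_const.add (continuous_id.mul continuous_const)).continuousAt
    exact hcont.eventually (eventually_gt_nhds (hxpos e he))
  -- derivative formula on positivity region
  have hF : ∀ θ : ℝ, (∀ e ∈ B, 0 < a e + θ * b e) →
      HasDerivAt (fun θ : ℝ => κ' *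
          ((∑ e ∈ B, (a e + θ * b e) * Real.log ((a e + θ * b e) / Qt e)) -
           ∑ i : S, (A i + θ * Bb i) * Real.log ((A i + θ * Bb i) / rowSum B Qt i)))
        (κ' * ((∑ e ∈ B, b e * (Real.log ((a e + θ * b e) / Qt e) + 1)) -
           ∑ i : S, Bb i * (Real.log ((A i + θ * Bb i) / rowSum B Qt i) + 1))) θ := by
    intro θ hθ
    refine HasDerivAt.const_mul κ' (HasDerivAt.sub ?_ ?_)
    · exact HasDerivAt.fun_sum fun e he => term_hasDerivAt (a e) (b e) (Qt e) θ (hθ e he)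
        (hQtpos e he)
    · exact HasDerivAt.fun_sum fun i _ => term_hasDerivAt (A i) (Bb i) (rowSum B Qt i) θ
        (hXpos θ hθ i) (hCpos i)
  -- second derivative
  have hG : HasDerivAt (fun θ : ℝ => κ' *
        ((∑ e ∈ B, b e * (Real.log ((a e + θ * b e) / Qt e) + 1)) -
         ∑ i : S, Bb i * (Real.log ((A i + θ * Bb i) / rowSum B Qt i) + 1)))
      (κ' * ((∑ e ∈ B, b e ^ 2 / (a e + θ0 * b e)) -
         ∑ i : S, Bb i ^ 2 / (A i + θ0 * Bb i))) θ0 := by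
    refine HasDerivAt.const_mul κ' (HasDerivAt.sub ?_ ?_)
    · exact HasDerivAt.fun_sum fun e he => term2_hasDerivAt (a e) (b e) (Qt e) θ0 (hxpos e he)
        (hQtpos e he)
    · exact HasDerivAt.fun_sum fun i _ => term2_hasDerivAt (A i) (Bb i) (rowSum B Qt i) θ0
        (hXpos θ0 hxpos i) (hCpos i)
  have heq : deriv (fun θ : ℝ => psibar B Qt κ κ' (fun e => Q0 e + θ * V e)) =ᶠ[nhds θ0]
      (fun θ : ℝ => κ' *
        ((∑ e ∈ B, b e * (Real.log ((a e + θ * b e) / Qt e) + 1)) -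
         ∑ i : S, Bb i * (Real.log ((A i + θ * Bb i) / rowSum B Qt i) + 1))) := by
    refine hU.mono fun θ hθ => ?_
    rw [hfun]
    exact (hF θ hθ).deriv
  -- value equality
  have hval : κ ^ 2 * κ' *
        ((∑ e ∈ B, V e ^ 2 / hatQ Qt κ (fun e' => Q0 e' + θ0 * V e') e) -
         ∑ i : S, (∑ j ∈ Finset.univ.filter (fun j => (i, j) ∈ B), V (i, j)) ^ 2 /
           rowSum B (hatQ Qt κ (fun e' => Q0 e' + θ0 * V e')) i) =
      κ' * ((∑ e ∈ B, b e ^ 2 / (a e + θ0 * b e)) -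
         ∑ i : S, Bb i ^ 2 / (A i + θ0 * Bb i)) := by
    have h1 : ∀ e ∈ B, b e ^ 2 / (a e + θ0 * b e) =
        κ ^ 2 * (V e ^ 2 / hatQ Qt κ (fun e' => Q0 e' + θ0 * V e') e) := by
      intro e he
      rw [hhat, hb_def]
      field_simp
    have h2 : ∀ i : S, Bb i ^ 2 / (A i + θ0 * Bb i) =
        κ ^ 2 * ((∑ j ∈ Finset.univ.filter (fun j => (i, j) ∈ B), V (i, j)) ^ 2 /
          rowSum B (hatQ Qt κ (fun e' => Q0 e' + θ0 * V e')) i) := by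
      intro i
      rw [hrow]
      have : Bb i = κ * ∑ j ∈ Finset.univ.filter (fun j => (i, j) ∈ B), V (i, j) := by
        simp only [hBb_def, hb_def, hR_def, Finset.mul_sum]
      rw [this, mul_pow]
      ring
    rw [Finset.sum_congr rfl h1, Finset.sum_congr rfl fun i _ => h2 i,
      ← Finset.mul_sum, ← Finset.mul_sum]
    ring
  have hnonneg : 0 ≤ κ ^ 2 * κ' *
        ((∑ e ∈ B, V e ^ 2 / hatQ Qt κ (fun e' => Q0 e' + θ0 * V e') e) -
         ∑ i : S, (∑ j ∈ Finset.univ.filter (fun j => (i, j) ∈ B), V (i, j)) ^ 2 /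
           rowSum B (hatQ Qt κ (fun e' => Q0 e' + θ0 * V e')) i) := by
    refine mul_nonneg (by positivity) (sub_nonneg.2 ?_)
    have hfib : ∑ e ∈ B, V e ^ 2 / hatQ Qt κ (fun e' => Q0 e' + θ0 * V e') e =
        ∑ i : S, ∑ j ∈ Finset.univ.filter (fun j => (i, j) ∈ B),
          V (i, j) ^ 2 / (a (i, j) + θ0 * b (i, j)) := by
      rw [show (fun e => V e ^ 2 / hatQ Qt κ (fun e' => Q0 e' + θ0 * V e') e) =
          (fun e => V e ^ 2 / (a e + θ0 * b e)) from funext fun e => by rw [hhat]]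
      exact sum_B_fiber B _
    rw [hfib]
    refine Finset.sum_le_sum fun i _ => ?_
    have hXsum : rowSum B (hatQ Qt κ (fun e' => Q0 e' + θ0 * V e')) i =
        ∑ j ∈ Finset.univ.filter (fun j => (i, j) ∈ B), (a (i, j) + θ0 * b (i, j)) := by
      rw [hrow]
      simp only [hA_def, hBb_def, hR_def, Finset.sum_add_distrib, Finset.mul_sum]
    rw [hXsum]
    exact Finset.sq_sum_div_le_sum_sq_div _ _
      (fun j hj => hxpos (i, j) (by simpa using hj))
  refine ⟨?_, hnonneg⟩
  rw [hval]
  exact hG.congr_of_eventuallyEq heq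
end
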